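/- The quadratic Boolean function (1,2)_n(x) = x₁x₂ + x₂x₃ + … + x_{n−1}x_n + x_nx₁ over GF(2) is balanced (has weight 2^{n−1}) whenever n is odd, n ≥ 3. -/

import Mathlib

theorem one_two_balanced_odd (n : ℕ) [NeZero n] (hn : 3 ≤ n) (hodd : Odd n) :
    (Finset.univ.filter
      (fun x : ZMod n → ZMod 2 => (∑ i : ZMod n, x i * x (i + 1)) = 1)).card = 2 ^ (n - 1) := by
  classical
  set f : (ZMod n → ZMod 2) → ZMod 2 := fun x => ∑ i : ZMod n, x i * x (i + 1) with hf
  have htwo : (2 : ZMod 2) = 0 := by decide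
  have key : ∀ x : ZMod n → ZMod 2, f (fun i => x i + 1) = f x + 1 := by
    intro x
    have h1 : (∑ i : ZMod n, x (i + 1)) = ∑ i : ZMod n, x i :=
      Fintype.sum_equiv (Equiv.addRight 1) _ _ (fun i => rfl)
    have hn1 : ((n : ZMod 2)) = 1 := by
      obtain ⟨k, hk⟩ := hodd
      subst hk
      push_cast
      rw [htwo]
      ring
    have step : f (fun i => x i + 1)
        = ∑ i : ZMod n, (x i * x (i+1) + (x i + (x (i+1) + 1))) := by
      simp only [hf]; apply Finset.sum_congr rfl; intro i _; ring
    rw [step, Finset.sum_add_distrib, Finset.sum_add_distrib, Finset.sum_add_distrib,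
      Finset.sum_const, h1, Finset.card_univ, ZMod.card]
    have : (∑ i : ZMod n, x i) + ((∑ i : ZMod n, x i) + n • (1 : ZMod 2)) = 1 := by
      rw [← add_assoc, nsmul_eq_mul, mul_one, hn1]
      rw [← two_mul, htwo]; ring
    rw [this]
  have hinv : ∀ x : ZMod n → ZMod 2, (fun i => x i + 1 + 1) = x := by
    intro x; funext i; rw [add_assoc, show (1 + 1 : ZMod 2) = 0 by decide, add_zero]
  have hcompl : (Finset.univ.filter (fun x => f x = 1)).card
      = (Finset.univ.filter (fun x => ¬ f x = 1)).card := by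
    refine Finset.card_bij' (fun x _ => fun i => x i + 1) (fun x _ => fun i => x i + 1)
      ?_ ?_ ?_ ?_
    · intro x hx
      simp only [Finset.mem_filter, Finset.mem_univ, true_and] at hx ⊢
      rw [key, hx]
      decide
    · intro x hx
      simp only [Finset.mem_filter, Finset.mem_univ, true_and] at hx ⊢
      have hx0 : f x = 0 := by
        rcases ZMod.val_cast_of_lt (a := 0) (by norm_num : (0:ℕ) < 2) with _
        have : f x = 0 ∨ f x = 1 := by
          generalize f x = a
          revert a; decide
        tauto
      rw [key, hx0, zero_add]
    · intro x _; exact hinv x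
    · intro x _; exact hinv x
  have htotal := Finset.card_filter_add_card_filter_not
      (s := (Finset.univ : Finset (ZMod n → ZMod 2))) (p := fun x => f x = 1)
  have hcard : (Finset.univ : Finset (ZMod n → ZMod 2)).card = 2 ^ n := by
    simp [Finset.card_univ, ZMod.card]
  have hn' : n - 1 + 1 = n := by omega
  have hpow : 2 ^ n = 2 * 2 ^ (n - 1) := by
    conv_lhs => rw [← hn']
    rw [pow_succ]; ring
  have hgoal : (Finset.univ.filter
      (fun x : ZMod n → ZMod 2 => (∑ i : ZMod n, x i * x (i + 1)) = 1))
      = Finset.univ.filter (fun x => f x = 1) := rfl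
  rw [hgoal]
  set m := 2 ^ (n - 1) with hm
  rw [hcard, hpow] at htotal
  rw [← hcompl] at htotal
  have htotal' : (Finset.univ.filter (fun x => f x = 1)).card
      + (Finset.univ.filter (fun x => f x = 1)).card = 2 * m := htotal
  omega
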